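/- Define d_gbw(X,Y)^2 = tr(M^{-1}X) + tr(M^{-1}Y) - 2 tr((X^{1/2} M^{-1} Y M^{-1} X^{1/2})^{1/2}) for SPD matrices X, Y and fixed SPD M. Then d_gbw(X,Y)^2 = d_bw(M^{-1/2} X M^{-1/2}, M^{-1/2} Y M^{-1/2})^2, where d_bw is the Bures-Wasserstein distance d_bw(A,B)^2 = tr(A) + tr(B) - 2 tr((A^{1/2} B A^{1/2})^{1/2}). -/

import Mathlib

open Matrix

/-- d_gbw(X,Y)² = d_bw(M^{-1/2} X M^{-1/2}, M^{-1/2} Y M^{-1/2})².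
Here N = M^{-1/2}, S = (X^{1/2} M⁻¹ Y M⁻¹ X^{1/2})^{1/2},
sqA = (N X N)^{1/2}, and T = (sqA (N Y N) sqA)^{1/2}. -/
theorem stmt7 {n : Type*} [Fintype n] [DecidableEq n]
    (X Y M sqX N S sqA T : Matrix n n ℝ)
    (hX : X.PosDef) (hY : Y.PosDef) (hM : M.PosDef)
    (hsqX : sqX.PosDef) (hsqX2 : sqX * sqX = X)
    (hN : N.PosDef) (hN2 : N * N = M⁻¹)
    (hS : S.PosDef) (hS2 : S * S = sqX * M⁻¹ * Y * M⁻¹ * sqX)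
    (hsqA : sqA.PosDef) (hsqA2 : sqA * sqA = N * X * N)
    (hT : T.PosDef) (hT2 : T * T = sqA * (N * Y * N) * sqA) :
    (M⁻¹ * X).trace + (M⁻¹ * Y).trace - 2 * S.trace =
      (N * X * N).trace + (N * Y * N).trace - 2 * T.trace := by
  have hNd : IsUnit N.det := hN.det_pos.ne'.isUnit
  have hAd : IsUnit sqA.det := hsqA.det_pos.ne'.isUnit
  have hNs : Nᵀ = N := by
    rw [← conjTranspose_eq_transpose_of_trivial]; exact hN.isHermitian
  have hXs : sqXᵀ = sqX := by
    rw [← conjTranspose_eq_transpose_of_trivial]; exact hsqX.isHermitian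
  have hAs : sqAᵀ = sqA := by
    rw [← conjTranspose_eq_transpose_of_trivial]; exact hsqA.isHermitian
  have hAis : sqA⁻¹ᵀ = sqA⁻¹ := by rw [transpose_nonsing_inv, hAs]
  obtain ⟨U, hU⟩ : ∃ U, U = sqA⁻¹ * (N * sqX) := ⟨_, rfl⟩
  have hUinv : sqA * U = N * sqX := by
    rw [hU, ← mul_assoc, mul_nonsing_inv sqA hAd, one_mul]
  have hUts : Uᵀ = sqX * N * sqA⁻¹ := by
    rw [hU, transpose_mul, transpose_mul, hNs, hXs, hAis, mul_assoc]
  have hUt : Uᵀ * sqA = sqX * N := by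
    rw [hUts, mul_assoc, nonsing_inv_mul sqA hAd, mul_one]
  have hUUt : U * Uᵀ = 1 := by
    have key : sqA * (U * Uᵀ) * sqA = sqA * sqA := by
      calc sqA * (U * Uᵀ) * sqA = (sqA * U) * (Uᵀ * sqA) := by
            simp only [mul_assoc]
        _ = (N * sqX) * (sqX * N) := by rw [hUinv, hUt]
        _ = N * X * N := by rw [← hsqX2]; simp only [mul_assoc]
        _ = sqA * sqA := hsqA2.symm
    have := congrArg (fun Z => sqA⁻¹ * Z * sqA⁻¹) key
    rw [show sqA⁻¹ * (sqA * (U * Uᵀ) * sqA) * sqA⁻¹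
        = (sqA⁻¹ * sqA) * (U * Uᵀ) * (sqA * sqA⁻¹) by simp only [mul_assoc],
      show sqA⁻¹ * (sqA * sqA) * sqA⁻¹ = (sqA⁻¹ * sqA) * (sqA * sqA⁻¹) by
        simp only [mul_assoc],
      nonsing_inv_mul sqA hAd, mul_nonsing_inv sqA hAd, one_mul, mul_one, mul_one] at this
    exact this
  have hUtU : Uᵀ * U = 1 := mul_eq_one_comm.mp hUUt
  have hconj : S = Uᵀ * T * U := by
    have hPSD : (Uᵀ * T * U).PosSemidef := by
      have := hT.posSemidef.mul_mul_conjTranspose_same Uᵀ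
      rwa [conjTranspose_eq_transpose_of_trivial, transpose_transpose] at this
    open scoped MatrixOrder in
    refine (CFC.sq_eq_sq_iff S (Uᵀ * T * U) (Matrix.nonneg_iff_posSemidef.mpr hS.posSemidef)
      (Matrix.nonneg_iff_posSemidef.mpr hPSD)).mp ?_
    have h1 : (Uᵀ * T * U) ^ 2 = Uᵀ * (T * T) * U := by
      rw [pow_two]
      calc Uᵀ * T * U * (Uᵀ * T * U) = Uᵀ * (T * ((U * Uᵀ) * (T * U))) := by
            simp only [mul_assoc]
        _ = Uᵀ * (T * T) * U := by rw [hUUt, one_mul]; simp only [mul_assoc]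
    rw [pow_two, hS2, h1, hT2]
    calc sqX * M⁻¹ * Y * M⁻¹ * sqX
        = sqX * (N * N) * Y * (N * N) * sqX := by rw [hN2]
      _ = (sqX * N) * ((N * Y * N) * (N * sqX)) := by simp only [mul_assoc]
      _ = (Uᵀ * sqA) * ((N * Y * N) * (sqA * U)) := by rw [hUt, hUinv]
      _ = Uᵀ * (sqA * (N * Y * N) * sqA) * U := by simp only [mul_assoc]
  have htrS : S.trace = T.trace := by
    rw [hconj, mul_assoc, trace_mul_comm, mul_assoc, hUUt, mul_one]
  have htrX : (M⁻¹ * X).trace = (N * X * N).trace := by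
    rw [← hN2, mul_assoc, trace_mul_comm]
  have htrY : (M⁻¹ * Y).trace = (N * Y * N).trace := by
    rw [← hN2, mul_assoc, trace_mul_comm]
  rw [htrS, htrX, htrY]
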